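/- Let p be a prime and let G be a group such that G/Z(G) ≅ C_p × C_p. Then the commutator subgroup of G is cyclic of order p; more precisely, if x, y ∈ G are elements whose images generate G/Z(G), then every commutator in G is a power of s = [x,y], and s has order p. -/

import Mathlib

namespace CommSubAux

variable {G : Type*} [Group G]

/-- abbreviation for the commutator in the statement's convention -/
def cmt (a b : G) : G := a⁻¹ * b⁻¹ * a * b

lemma cmt_def (a b : G) : cmt a b = a⁻¹ * b⁻¹ * a * b := rfl

variable (hc : ∀ a b g : G, g * cmt a b = cmt a b * g)

lemma cmt_inv_eq (a b : G) : cmt a b = (cmt b a)⁻¹ := by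
  simp only [cmt]; group

include hc in
lemma cmt_mul_left (a b g : G) : cmt (a * b) g = cmt a g * cmt b g := by
  have key := hc a g b⁻¹
  calc cmt (a * b) g
      = b⁻¹ * (cmt a g * (g⁻¹ * (b * g))) := by simp only [cmt]; group
    _ = (b⁻¹ * cmt a g) * (g⁻¹ * (b * g)) := by rw [mul_assoc]
    _ = (cmt a g * b⁻¹) * (g⁻¹ * (b * g)) := by rw [key]
    _ = cmt a g * cmt b g := by simp only [cmt]; group

include hc in
lemma cmt_mul_right (a b g : G) : cmt a (b * g) = cmt a b * cmt a g := by
  rw [cmt_inv_eq a (b*g), cmt_mul_left hc, mul_inv_rev, ← cmt_inv_eq, ← cmt_inv_eq,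
    hc a g (cmt a b)]

lemma cmt_one_left (b : G) : cmt 1 b = 1 := by simp [cmt]

lemma cmt_one_right (a : G) : cmt a 1 = 1 := by simp [cmt]

include hc in
lemma cmt_pow_left (a b : G) (n : ℕ) : cmt (a ^ n) b = cmt a b ^ n := by
  induction n with
  | zero => simp [cmt_one_left]
  | succ n ih => rw [pow_succ, cmt_mul_left hc, ih, pow_succ]

include hc in
lemma cmt_inv_left (a b : G) : cmt a⁻¹ b = (cmt a b)⁻¹ := by
  have h := cmt_mul_left hc a a⁻¹ b
  rw [mul_inv_cancel, cmt_one_left] at h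
  exact (inv_eq_of_mul_eq_one_right h.symm).symm

include hc in
lemma cmt_zpow_left (a b : G) (n : ℤ) : cmt (a ^ n) b = cmt a b ^ n := by
  cases n with
  | ofNat n => simpa using cmt_pow_left hc a b n
  | negSucc n =>
    rw [zpow_negSucc, cmt_inv_left hc, cmt_pow_left hc, zpow_negSucc]

include hc in
lemma cmt_zpow_right (a b : G) (n : ℤ) : cmt a (b ^ n) = cmt a b ^ n := by
  rw [cmt_inv_eq, cmt_zpow_left hc, ← inv_zpow, ← cmt_inv_eq]

end CommSubAux

namespace CommSubAux

variable {G : Type*} [Group G]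

lemma cmt_self (a : G) : cmt a a = 1 := by simp only [cmt]; group

variable (hc : ∀ a b g : G, g * cmt a b = cmt a b * g)

lemma cmt_central_left (z b : G) (hz : ∀ g, g * z = z * g) : cmt z b = 1 := by
  calc cmt z b = z⁻¹ * (b⁻¹ * z) * b := by simp only [cmt]; group
    _ = z⁻¹ * (z * b⁻¹) * b := by rw [hz b⁻¹]
    _ = 1 := by group

lemma cmt_central_right (a w : G) (hw : ∀ g, g * w = w * g) : cmt a w = 1 := by
  calc cmt a w = a⁻¹ * w⁻¹ * (a * w) := by simp only [cmt]; group
    _ = a⁻¹ * w⁻¹ * (w * a) := by rw [hw a]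
    _ = 1 := by group

include hc in
lemma cmt_main (x y : G) (i j k l : ℤ) (z w : G)
    (hz : ∀ g, g * z = z * g) (hw : ∀ g, g * w = w * g) :
    cmt (x ^ i * y ^ j * z) (x ^ k * y ^ l * w) = cmt x y ^ (i * l - j * k) := by
  rw [cmt_mul_left hc, cmt_central_left _ _ hz, mul_one,
    cmt_mul_left hc, cmt_mul_right hc, cmt_mul_right hc,
    cmt_central_right _ _ hw, mul_one,
    cmt_mul_right hc, cmt_mul_right hc,
    cmt_central_right _ _ hw, mul_one]
  simp only [cmt_zpow_left hc, cmt_zpow_right hc]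
  rw [cmt_self, cmt_self, cmt_inv_eq y x]
  simp only [one_zpow, one_mul, mul_one, ← zpow_mul, ← zpow_neg, inv_zpow]
  rw [← zpow_add]
  congr 1
  ring

lemma exists_zpow_zpow {Q : Type*} [Group Q] (hcomm : ∀ a b : Q, a * b = b * a)
    (u v : Q) (h : Subgroup.closure ({u, v} : Set Q) = ⊤) (q : Q) :
    ∃ m n : ℤ, u ^ m * v ^ n = q := by
  have hq : q ∈ Subgroup.closure ({u, v} : Set Q) := h ▸ Subgroup.mem_top q
  induction hq using Subgroup.closure_induction with
  | mem g hg =>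
    rcases hg with rfl | rfl
    · exact ⟨1, 0, by simp⟩
    · exact ⟨0, 1, by simp⟩
  | one => exact ⟨0, 0, by simp⟩
  | mul g1 g2 _ _ ih1 ih2 =>
    obtain ⟨m1, n1, rfl⟩ := ih1; obtain ⟨m2, n2, rfl⟩ := ih2
    refine ⟨m1 + m2, n1 + n2, ?_⟩
    have h0 : Commute v u := hcomm v u
    have h' : Commute (v ^ n1) (u ^ m2) := h0.zpow_zpow n1 m2
    rw [zpow_add, zpow_add, Commute.mul_mul_mul_comm h']
  | inv g _ ih =>
    obtain ⟨m, n, rfl⟩ := ih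
    refine ⟨-m, -n, ?_⟩
    rw [zpow_neg, zpow_neg, ← mul_inv_rev]
    rw [hcomm (v ^ n) (u ^ m)]

end CommSubAux


theorem commutator_subgroup_cyclic_of_order_p (p : ℕ) (hp : p.Prime)
    (G : Type*) [Group G]
    (hq : Nonempty ((G ⧸ Subgroup.center G) ≃*
      Multiplicative (ZMod p) × Multiplicative (ZMod p))) :
    IsCyclic ↥(commutator G) ∧ Nat.card ↥(commutator G) = p ∧
    ∀ x y : G,
      Subgroup.closure {(x : G ⧸ Subgroup.center G), (y : G ⧸ Subgroup.center G)} = ⊤ →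
      (∀ a b : G, ∃ k : ℤ, a⁻¹ * b⁻¹ * a * b = (x⁻¹ * y⁻¹ * x * y) ^ k) ∧
      orderOf (x⁻¹ * y⁻¹ * x * y) = p := by
  classical
  obtain ⟨e⟩ := hq
  haveI : Fact p.Prime := ⟨hp⟩
  set Q := G ⧸ Subgroup.center G with hQdef
  set P := Multiplicative (ZMod p) × Multiplicative (ZMod p) with hPdef
  open CommSubAux in
  -- Q is commutative
  have hcommQ : ∀ a b : Q, a * b = b * a := fun a b =>
    e.injective (by rw [map_mul, map_mul, mul_comm])
  -- commutators are central
  have hmem : ∀ a b : G, CommSubAux.cmt a b ∈ Subgroup.center G := by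
    intro a b
    rw [← QuotientGroup.eq_one_iff]
    show ((a⁻¹ * b⁻¹ * a * b : G) : Q) = 1
    simp only [QuotientGroup.mk_mul, QuotientGroup.mk_inv]
    rw [mul_assoc ((a : Q))⁻¹, hcommQ ((b : Q))⁻¹ (a : Q)]
    group
  have hc : ∀ a b g : G, g * CommSubAux.cmt a b = CommSubAux.cmt a b * g :=
    fun a b g => Subgroup.mem_center_iff.mp (hmem a b) g
  -- p-th powers are trivial in P, hence in Q, so a^p is central
  have hPp : ∀ g : P, g ^ p = 1 := by
    intro g
    have h1 : ∀ a : Multiplicative (ZMod p), a ^ p = 1 := by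
      intro a
      rw [← ofAdd_toAdd a, ← ofAdd_nsmul, nsmul_eq_mul, ZMod.natCast_self, zero_mul,
        ofAdd_zero]
    have : g ^ p = (g.1 ^ p, g.2 ^ p) := rfl
    rw [this, h1, h1]
    rfl
  have hQp : ∀ q : Q, q ^ p = 1 := fun q =>
    e.injective (by rw [map_pow, map_one, hPp (e q)])
  have hpowc : ∀ a : G, a ^ p ∈ Subgroup.center G := by
    intro a
    rw [← QuotientGroup.eq_one_iff]
    show ((a ^ p : G) : Q) = 1
    rw [QuotientGroup.mk_pow]
    exact hQp _
  -- cardinality of Q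
  have hcardQ : Nat.card Q = p * p := by
    rw [Nat.card_congr e.toEquiv, Nat.card_prod,
      Nat.card_congr Multiplicative.toAdd, Nat.card_zmod]
  -- the key statement for any generating pair
  have key : ∀ x y : G,
      Subgroup.closure {(x : Q), (y : Q)} = ⊤ →
      (∀ a b : G, ∃ k : ℤ, CommSubAux.cmt a b = CommSubAux.cmt x y ^ k) ∧
      orderOf (CommSubAux.cmt x y) = p := by
    intro x y hxy
    have decomp : ∀ g : G, ∃ i j : ℤ, ∃ z : G, z ∈ Subgroup.center G ∧
        g = x ^ i * y ^ j * z := by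
      intro g
      obtain ⟨m, n, hmn⟩ := CommSubAux.exists_zpow_zpow hcommQ (x : Q) (y : Q) hxy (g : Q)
      refine ⟨m, n, (x ^ m * y ^ n)⁻¹ * g, ?_, by group⟩
      rw [← QuotientGroup.eq_one_iff]
      show (((x ^ m * y ^ n)⁻¹ * g : G) : Q) = 1
      rw [QuotientGroup.mk_mul, QuotientGroup.mk_inv, QuotientGroup.mk_mul,
        QuotientGroup.mk_zpow, QuotientGroup.mk_zpow, hmn, inv_mul_cancel]
    have part1 : ∀ a b : G, ∃ k : ℤ, CommSubAux.cmt a b = CommSubAux.cmt x y ^ k := by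
      intro a b
      obtain ⟨i, j, z, hz, rfl⟩ := decomp a
      obtain ⟨k, l, w, hw, rfl⟩ := decomp b
      exact ⟨i * l - j * k, CommSubAux.cmt_main hc x y i j k l z w
        (Subgroup.mem_center_iff.mp hz) (Subgroup.mem_center_iff.mp hw)⟩
    have hsp : CommSubAux.cmt x y ^ p = 1 := by
      have h1 : CommSubAux.cmt (x ^ (p : ℤ)) y = CommSubAux.cmt x y ^ (p : ℤ) :=
        CommSubAux.cmt_zpow_left hc x y p
      have h2 : CommSubAux.cmt (x ^ (p : ℤ)) y = 1 := by
        rw [zpow_natCast]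
        exact CommSubAux.cmt_central_left _ _ (Subgroup.mem_center_iff.mp (hpowc x))
      rw [h2] at h1
      rw [← zpow_natCast]
      exact h1.symm
    have hsne : CommSubAux.cmt x y ≠ 1 := by
      intro hs1
      have hall : ∀ a b : G, a * b = b * a := by
        intro a b
        obtain ⟨k, hk⟩ := part1 a b
        rw [hs1, one_zpow] at hk
        have h2 : b * a * (a⁻¹ * b⁻¹ * a * b) = b * a * 1 := by
          rw [← CommSubAux.cmt_def, hk]
        simpa [mul_assoc] using h2
      have hsub : Subsingleton Q := by
        constructor
        intro q1 q2
        obtain ⟨g1, rfl⟩ := QuotientGroup.mk_surjective q1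
        obtain ⟨g2, rfl⟩ := QuotientGroup.mk_surjective q2
        rw [QuotientGroup.eq]
        exact Subgroup.mem_center_iff.mpr (fun g => hall g _)
      have h1 : Nat.card Q = 1 := Nat.card_eq_one_iff_unique.mpr ⟨hsub, ⟨1⟩⟩
      rw [hcardQ] at h1
      have := hp.two_le
      nlinarith
    have hdvd : orderOf (CommSubAux.cmt x y) ∣ p := orderOf_dvd_of_pow_eq_one hsp
    have hord : orderOf (CommSubAux.cmt x y) = p := by
      rcases (Nat.Prime.eq_one_or_self_of_dvd hp _ hdvd) with h | h
      · exact absurd (orderOf_eq_one_iff.mp h) hsne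
      · exact h
    exact ⟨part1, hord⟩
  -- construct a generating pair
  have hPtop : Subgroup.closure ({(Multiplicative.ofAdd (1 : ZMod p), 1),
      (1, Multiplicative.ofAdd (1 : ZMod p))} : Set P) = ⊤ := by
    rw [eq_top_iff]
    rintro ⟨a, b⟩ -
    have hmem1 : ((Multiplicative.ofAdd (1 : ZMod p), 1) : P) ∈
        Subgroup.closure ({(Multiplicative.ofAdd (1 : ZMod p), 1),
          (1, Multiplicative.ofAdd (1 : ZMod p))} : Set P) :=
      Subgroup.subset_closure (by simp)
    have hmem2 : ((1, Multiplicative.ofAdd (1 : ZMod p)) : P) ∈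
        Subgroup.closure ({(Multiplicative.ofAdd (1 : ZMod p), 1),
          (1, Multiplicative.ofAdd (1 : ZMod p))} : Set P) :=
      Subgroup.subset_closure (by simp)
    have heq : ((a, b) : P) = ((Multiplicative.ofAdd (1 : ZMod p), 1) : P) ^
        (a.toAdd).val * ((1, Multiplicative.ofAdd (1 : ZMod p)) : P) ^ (b.toAdd).val := by
      have h1 : ∀ (c : Multiplicative (ZMod p)),
          (Multiplicative.ofAdd (1 : ZMod p)) ^ (c.toAdd).val = c := by
        intro c
        rw [← ofAdd_nsmul, nsmul_eq_mul, mul_one, ZMod.natCast_val, ZMod.cast_id,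
          ofAdd_toAdd]
      rw [Prod.pow_mk, Prod.pow_mk, Prod.mk_mul_mk, h1, h1, one_pow, one_pow,
        mul_one, one_mul]
    rw [heq]
    exact mul_mem (pow_mem hmem1 _) (pow_mem hmem2 _)
  have hQtop : Subgroup.closure ({e.symm (Multiplicative.ofAdd (1 : ZMod p), 1),
      e.symm (1, Multiplicative.ofAdd (1 : ZMod p))} : Set Q) = ⊤ := by
    have := Subgroup.map_top_of_surjective e.symm.toMonoidHom e.symm.surjective
    rw [← hPtop, MonoidHom.map_closure] at this
    rw [← this]
    congr 1
    rw [Set.image_pair]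
    rfl
  obtain ⟨x0, hx0⟩ := QuotientGroup.mk_surjective (e.symm (Multiplicative.ofAdd (1 : ZMod p), 1))
  obtain ⟨y0, hy0⟩ := QuotientGroup.mk_surjective (e.symm (1, Multiplicative.ofAdd (1 : ZMod p)))
  have hgen : Subgroup.closure ({(x0 : Q), (y0 : Q)} : Set Q) = ⊤ := by
    rw [hx0, hy0]; exact hQtop
  obtain ⟨hpart1, hord⟩ := key x0 y0 hgen
  -- commutator G = zpowers (cmt x0 y0)
  have hsub_eq : commutator G = Subgroup.zpowers (CommSubAux.cmt x0 y0) := by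
    apply le_antisymm
    · rw [commutator_def, Subgroup.commutator_le]
      intro g1 _ g2 _
      obtain ⟨k, hk⟩ := hpart1 g1⁻¹ g2⁻¹
      rw [Subgroup.mem_zpowers_iff]
      refine ⟨k, ?_⟩
      rw [← hk, commutatorElement_def, CommSubAux.cmt_def]
      group
    · rw [Subgroup.zpowers_le]
      open scoped commutatorElement in
      have hs0 : CommSubAux.cmt x0 y0 = ⁅x0⁻¹, y0⁻¹⁆ := by
        rw [commutatorElement_def, CommSubAux.cmt_def]
        group
      rw [hs0, commutator_def]
      exact Subgroup.commutator_mem_commutator (Subgroup.mem_top _) (Subgroup.mem_top _)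
  refine ⟨?_, ?_, ?_⟩
  · rw [hsub_eq]
    exact ⟨⟨⟨CommSubAux.cmt x0 y0, Subgroup.mem_zpowers _⟩, by
      rintro ⟨a, ha⟩
      obtain ⟨k, hk⟩ := Subgroup.mem_zpowers_iff.mp ha
      exact ⟨k, Subtype.ext (by simp [← hk])⟩⟩⟩
  · rw [hsub_eq, Nat.card_zpowers]
    exact hord
  · intro x y hxy
    obtain ⟨h1, h2⟩ := key x y hxy
    exact ⟨fun a b => h1 a b, h2⟩
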